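/- Lebesgue measure λ restricted to [0,1] does not have the ∞-Boman covering property for any constant C > 0: for the closed balls (intervals) B^cl(x_n, r_n) = [2^{-n}, 2^{-n+1}] (so x_n = 3·2^{-n-1}, r_n = 2^{-n-1}), weights w_n = 2^{-n}, and dilations t_n = 3, the ratio ‖ Σ_{n=1}^N w_n · 1_{B^cl(x_n, 3 r_n)} / λ(B^cl(x_n, 3 r_n)) ‖_{L^∞(λ)} / ‖ Σ_{n=1}^N w_n · 1_{B^cl(x_n, r_n)} / λ(B^cl(x_n, r_n)) ‖_{L^∞(λ)} tends to infinity as N → ∞; in particular ‖ Σ_{n=1}^N w_n · 1_{B^cl(x_n, r_n)} / λ(B^cl(x_n, r_n)) ‖_{L^∞(λ)} = 1 while ‖ Σ_{n=1}^N w_n · 1_{B^cl(x_n, 3 r_n)} / λ(B^cl(x_n, 3 r_n)) ‖_{L^∞(λ)} grows linearly in N. -/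

import Mathlib

open MeasureTheory Metric ENNReal Set Filter

noncomputable section

/-- Lebesgue measure restricted to `[0,1]`. -/
def lam : Measure ℝ := volume.restrict (Icc (0 : ℝ) 1)

/-- `Σ_{n=1}^N w_n 1_{B^cl(x_n, t·r_n)} / λ(B^cl(x_n, t·r_n))` for the balls
`B^cl(x_n, r_n) = [2^{-n}, 2^{-n+1}]` (so `x_n = 3·2^{-n-1}`, `r_n = 2^{-n-1}`), weights
`w_n = 2^{-n}`, and a common dilation factor `t`. -/
def bomanSum (N : ℕ) (t : ℝ) (y : ℝ) : ℝ≥0∞ :=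
  ∑ n ∈ Finset.Icc 1 N,
    (closedBall (3 * 2 ^ (-(n : ℤ) - 1)) (t * 2 ^ (-(n : ℤ) - 1))).indicator
      (fun _ => ENNReal.ofReal ((2 : ℝ) ^ (-(n : ℤ))) /
        lam (closedBall ((3 : ℝ) * 2 ^ (-(n : ℤ) - 1)) (t * 2 ^ (-(n : ℤ) - 1)))) y

lemma hpow1 (n : ℕ) : (2:ℝ) ^ (-(n:ℤ)) = 2 ^ (-(n:ℤ)-1) * 2 := by
  rw [← zpow_add_one₀ (two_ne_zero)]
  congr 1
  ring

lemma hpow2 (n : ℕ) : (2:ℝ) ^ (-(n:ℤ)+1) = 2 ^ (-(n:ℤ)-1) * 4 := by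
  rw [show (-(n:ℤ)+1) = (-(n:ℤ)-1)+2 by ring, zpow_add₀ (two_ne_zero)]
  norm_num

lemma ball_one (n : ℕ) :
    closedBall (3 * (2:ℝ) ^ (-(n:ℤ) - 1)) (1 * 2 ^ (-(n:ℤ) - 1)) =
      Icc ((2:ℝ)^(-(n:ℤ))) ((2:ℝ)^(-(n:ℤ)+1)) := by
  rw [Real.closedBall_eq_Icc, hpow1, hpow2]
  congr 1 <;> ring

lemma ball_three (n : ℕ) :
    closedBall (3 * (2:ℝ) ^ (-(n:ℤ) - 1)) (3 * 2 ^ (-(n:ℤ) - 1)) =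
      Icc (0:ℝ) (3 * 2^(-(n:ℤ))) := by
  rw [Real.closedBall_eq_Icc, hpow1]
  congr 1 <;> ring

lemma lam_Icc {a b : ℝ} (ha : 0 ≤ a) (hb : b ≤ 1) :
    lam (Icc a b) = ENNReal.ofReal (b - a) := by
  rw [lam, Measure.restrict_apply measurableSet_Icc,
    inter_eq_left.mpr (Icc_subset_Icc ha hb), Real.volume_Icc]

lemma zpow_neg_le_one (n : ℕ) : (2:ℝ) ^ (-(n:ℤ)) ≤ 1 :=
  zpow_le_one_of_nonpos₀ one_le_two (by omega)

lemma zpow_pos' (m : ℤ) : (0:ℝ) < 2 ^ m := by positivity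

/-- The value of the undilated `n`-th term on its ball is `1`. -/
lemma val_one (n : ℕ) (hn : 1 ≤ n) :
    ENNReal.ofReal ((2 : ℝ) ^ (-(n : ℤ))) /
      lam (closedBall ((3 : ℝ) * 2 ^ (-(n : ℤ) - 1)) (1 * 2 ^ (-(n : ℤ) - 1))) = 1 := by
  rw [ball_one, lam_Icc (zpow_pos' _).le
      (zpow_le_one_of_nonpos₀ one_le_two (by omega)),
    show (2:ℝ)^(-(n:ℤ)+1) - 2^(-(n:ℤ)) = 2^(-(n:ℤ)) by
      rw [zpow_add_one₀ (two_ne_zero)]; ring]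
  exact ENNReal.div_self (by simp [(zpow_pos' (-(n:ℤ))).le, (zpow_pos' (-(n:ℤ))).ne'])
    ENNReal.ofReal_ne_top

lemma lam_ball_three_le (n : ℕ) :
    lam (closedBall ((3 : ℝ) * 2 ^ (-(n : ℤ) - 1)) (3 * 2 ^ (-(n : ℤ) - 1))) ≤
      ENNReal.ofReal (3 * 2 ^ (-(n:ℤ))) := by
  rw [ball_three, lam, Measure.restrict_apply measurableSet_Icc]
  calc volume (Icc (0:ℝ) (3 * 2^(-(n:ℤ))) ∩ Icc 0 1) ≤ volume (Icc (0:ℝ) (3 * 2^(-(n:ℤ)))) :=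
        measure_mono inter_subset_left
    _ = ENNReal.ofReal (3 * 2 ^ (-(n:ℤ))) := by rw [Real.volume_Icc]; norm_num

lemma lam_ball_three_ge (n : ℕ) (hn : 1 ≤ n) :
    ENNReal.ofReal ((2:ℝ) ^ (-(n:ℤ))) ≤
      lam (closedBall ((3 : ℝ) * 2 ^ (-(n : ℤ) - 1)) (3 * 2 ^ (-(n : ℤ) - 1))) := by
  rw [ball_three]
  calc ENNReal.ofReal ((2:ℝ) ^ (-(n:ℤ))) = lam (Icc (0:ℝ) ((2:ℝ)^(-(n:ℤ)))) := by
        rw [lam_Icc le_rfl (zpow_neg_le_one n)]; norm_num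
    _ ≤ lam (Icc (0:ℝ) (3 * 2^(-(n:ℤ)))) := by
        apply measure_mono (Icc_subset_Icc_right ?_)
        nlinarith [zpow_pos' (-(n:ℤ))]

/-- The value of the dilated `n`-th term is at least `1/3`. -/
lemma val_three_ge (n : ℕ) :
    ENNReal.ofReal (1/3 : ℝ) ≤ ENNReal.ofReal ((2 : ℝ) ^ (-(n : ℤ))) /
      lam (closedBall ((3 : ℝ) * 2 ^ (-(n : ℤ) - 1)) (3 * 2 ^ (-(n : ℤ) - 1))) := by
  have h := ENNReal.div_le_div_left (lam_ball_three_le n)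
    (ENNReal.ofReal ((2 : ℝ) ^ (-(n : ℤ))))
  refine le_trans (le_of_eq ?_) h
  rw [← ENNReal.ofReal_div_of_pos (by positivity)]
  congr 1
  have := (zpow_pos' (-(n:ℤ))).ne'
  field_simp

/-- The value of the dilated `n`-th term is at most `1`. -/
lemma val_three_le (n : ℕ) (hn : 1 ≤ n) :
    ENNReal.ofReal ((2 : ℝ) ^ (-(n : ℤ))) /
      lam (closedBall ((3 : ℝ) * 2 ^ (-(n : ℤ) - 1)) (3 * 2 ^ (-(n : ℤ) - 1))) ≤ 1 :=
  ENNReal.div_le_of_le_mul (by rw [one_mul]; exact lam_ball_three_ge n hn)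

lemma part1 (N : ℕ) (hN : 1 ≤ N) : essSup (bomanSum N 1) lam = 1 := by
  refine le_antisymm ?_ ?_
  · -- upper bound: a.e. at most one interval contains `x`
    apply essSup_le_of_ae_le (hfbdd := by isBoundedDefault)
    have hS : lam ((fun n : ℕ => (2:ℝ)^(-(n:ℤ))) '' (Set.Icc 1 N)) = 0 := by
      have hfin : ((fun n : ℕ => (2:ℝ)^(-(n:ℤ))) '' (Set.Icc 1 N)).Finite :=
        (Set.finite_Icc 1 N).image _
      rw [lam, Measure.restrict_apply hfin.measurableSet]
      exact measure_mono_null inter_subset_left (hfin.measure_zero _)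
    filter_upwards [measure_eq_zero_iff_ae_notMem.mp hS] with x hx
    unfold bomanSum
    have hterm : ∀ n ∈ Finset.Icc 1 N,
        (closedBall (3 * 2 ^ (-(n : ℤ) - 1)) ((1:ℝ) * 2 ^ (-(n : ℤ) - 1))).indicator
          (fun _ => ENNReal.ofReal ((2 : ℝ) ^ (-(n : ℤ))) /
            lam (closedBall ((3 : ℝ) * 2 ^ (-(n : ℤ) - 1)) (1 * 2 ^ (-(n : ℤ) - 1)))) x =
        (Icc ((2:ℝ)^(-(n:ℤ))) ((2:ℝ)^(-(n:ℤ)+1))).indicator (fun _ => (1:ℝ≥0∞)) x := by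
      intro n hn
      rw [Finset.mem_Icc] at hn
      simp only [val_one n hn.1]
      rw [ball_one]
    rw [Finset.sum_congr rfl hterm]
    simp only [Set.indicator_apply, Finset.sum_boole]
    rw [show (1:ℝ≥0∞) = ((1:ℕ):ℝ≥0∞) from by norm_num, Nat.cast_le]
    apply Finset.card_le_one.mpr
    intro n hn m hm
    rw [Finset.mem_filter, Finset.mem_Icc] at hn hm
    · by_contra hne
      have key : ∀ a b : ℕ, 1 ≤ a → a ≤ N → a < b →
          x ∈ Icc ((2:ℝ)^(-(a:ℤ))) ((2:ℝ)^(-(a:ℤ)+1)) →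
          x ∈ Icc ((2:ℝ)^(-(b:ℤ))) ((2:ℝ)^(-(b:ℤ)+1)) → False := by
        intro a b ha haN hab hxa hxb
        have h1 : (2:ℝ)^(-(b:ℤ)+1) ≤ (2:ℝ)^(-(a:ℤ)) :=
          zpow_le_zpow_right₀ one_le_two (by omega)
        have hx2 : x = (2:ℝ)^(-(a:ℤ)) := le_antisymm (hxb.2.trans h1) hxa.1
        exact hx ⟨a, Set.mem_Icc.mpr ⟨ha, haN⟩, hx2.symm⟩
      rcases lt_or_gt_of_ne hne with h | h
      · exact key n m hn.1.1 hn.1.2 h hn.2 hm.2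
      · exact key m n hm.1.1 hm.1.2 h hm.2 hn.2
  · -- lower bound: value `1` on `Ioo (1/2) 1`
    apply le_limsup_of_frequently_le'
    rw [frequently_ae_iff]
    intro h0
    have hsub : Ioo (1/2 : ℝ) 1 ⊆ {x | (1:ℝ≥0∞) ≤ bomanSum N 1 x} := by
      intro x hx
      have hmem : x ∈ closedBall (3 * (2:ℝ) ^ (-((1:ℕ):ℤ) - 1)) (1 * 2 ^ (-((1:ℕ):ℤ) - 1)) := by
        rw [ball_one]
        refine Set.mem_Icc.mpr ⟨?_, ?_⟩ <;> · push_cast; norm_num; linarith [hx.1, hx.2]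
      have h1N : (1:ℕ) ∈ Finset.Icc 1 N := Finset.mem_Icc.mpr ⟨le_rfl, hN⟩
      have hle := Finset.single_le_sum (f := fun n : ℕ =>
        (closedBall (3 * 2 ^ (-(n : ℤ) - 1)) ((1:ℝ) * 2 ^ (-(n : ℤ) - 1))).indicator
          (fun _ => ENNReal.ofReal ((2 : ℝ) ^ (-(n : ℤ))) /
            lam (closedBall ((3 : ℝ) * 2 ^ (-(n : ℤ) - 1)) (1 * 2 ^ (-(n : ℤ) - 1)))) x)
        (fun i _ => zero_le) h1N
      rw [Set.indicator_of_mem hmem, val_one 1 le_rfl] at hle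
      exact hle
    have : lam (Ioo (1/2 : ℝ) 1) = 0 := measure_mono_null hsub h0
    rw [lam, Measure.restrict_apply measurableSet_Ioo,
      inter_eq_left.mpr (fun y hy => Set.mem_Icc.mpr ⟨by linarith [hy.1], le_of_lt hy.2⟩),
      Real.volume_Ioo] at this
    simp only [ENNReal.ofReal_eq_zero] at this
    norm_num at this

lemma part2 (N : ℕ) : ENNReal.ofReal ((N : ℝ) / 3) ≤ essSup (bomanSum N 3) lam := by
  apply le_limsup_of_frequently_le'
  rw [frequently_ae_iff]
  intro h0
  have hsub : Ioo (0 : ℝ) (2^(-(N:ℤ))) ⊆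
      {x | ENNReal.ofReal ((N : ℝ) / 3) ≤ bomanSum N 3 x} := by
    intro x hx
    have hbound : ∀ n ∈ Finset.Icc 1 N, ENNReal.ofReal (1/3 : ℝ) ≤
        (closedBall (3 * 2 ^ (-(n : ℤ) - 1)) ((3:ℝ) * 2 ^ (-(n : ℤ) - 1))).indicator
          (fun _ => ENNReal.ofReal ((2 : ℝ) ^ (-(n : ℤ))) /
            lam (closedBall ((3 : ℝ) * 2 ^ (-(n : ℤ) - 1)) (3 * 2 ^ (-(n : ℤ) - 1)))) x := by
      intro n hn
      rw [Finset.mem_Icc] at hn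
      have hmem : x ∈ closedBall (3 * (2:ℝ) ^ (-(n:ℤ) - 1)) (3 * 2 ^ (-(n:ℤ) - 1)) := by
        rw [ball_three]
        refine Set.mem_Icc.mpr ⟨hx.1.le, hx.2.le.trans ?_⟩
        have h1 : (2:ℝ)^(-(N:ℤ)) ≤ (2:ℝ)^(-(n:ℤ)) :=
          zpow_le_zpow_right₀ one_le_two (by omega)
        nlinarith [zpow_pos' (-(n:ℤ))]
      rw [Set.indicator_of_mem hmem]
      exact val_three_ge n
    calc ENNReal.ofReal ((N : ℝ) / 3)
        = (Finset.Icc 1 N).card • ENNReal.ofReal (1/3 : ℝ) := by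
          rw [Nat.card_Icc, Nat.add_sub_cancel, nsmul_eq_mul, ← ENNReal.ofReal_natCast N,
            ← ENNReal.ofReal_mul (by positivity), mul_one_div]
      _ ≤ bomanSum N 3 x := Finset.card_nsmul_le_sum _ _ _ hbound
  have : lam (Ioo (0 : ℝ) (2^(-(N:ℤ)))) = 0 := measure_mono_null hsub h0
  rw [lam, Measure.restrict_apply measurableSet_Ioo,
    inter_eq_left.mpr (fun y hy => Set.mem_Icc.mpr ⟨hy.1.le, hy.2.le.trans (zpow_neg_le_one N)⟩),
    Real.volume_Ioo] at this
  simp only [ENNReal.ofReal_eq_zero, sub_zero] at this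
  exact absurd this (not_le.mpr (zpow_pos' (-(N:ℤ))))

lemma part3 (N : ℕ) : essSup (bomanSum N 3) lam ≤ (N : ℝ≥0∞) := by
  apply essSup_le_of_ae_le (hfbdd := by isBoundedDefault)
  apply Filter.Eventually.of_forall
  intro x
  calc bomanSum N 3 x ≤ ∑ n ∈ Finset.Icc 1 N, (1 : ℝ≥0∞) := by
        apply Finset.sum_le_sum
        intro n hn
        rw [Finset.mem_Icc] at hn
        classical
        rw [Set.indicator_apply]
        split
        · exact val_three_le n hn.1
        · exact zero_le
    _ = (N : ℝ≥0∞) := by rw [Finset.sum_const, Nat.card_Icc, Nat.add_sub_cancel,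
          nsmul_eq_mul, mul_one]

/-- **Failure of the `∞`-Boman covering property for Lebesgue measure on `[0,1]`.**
For the intervals `B^cl(x_n, r_n) = [2^{-n}, 2^{-n+1}]`, weights `w_n = 2^{-n}`, and dilations
`t_n = 3`, the undilated sums have `L^∞` norm `1`, while the dilated sums have `L^∞` norm
growing linearly in `N` (between `N/3` and `N`); in particular the ratio of the two norms tends
to infinity with `N`, so no constant `C` can realize the `∞`-Boman covering property. -/
theorem infty_boman_fails :
    (∀ N : ℕ, 1 ≤ N → essSup (bomanSum N 1) lam = 1) ∧
    (∀ N : ℕ, ENNReal.ofReal ((N : ℝ) / 3) ≤ essSup (bomanSum N 3) lam) ∧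
    (∀ N : ℕ, essSup (bomanSum N 3) lam ≤ (N : ℝ≥0∞)) ∧
    Tendsto (fun N : ℕ => essSup (bomanSum N 3) lam / essSup (bomanSum N 1) lam)
      atTop (nhds ⊤) := by
  refine ⟨part1, part2, part3, ?_⟩
  apply tendsto_nhds_top_mono (f := fun N : ℕ => ENNReal.ofReal ((N : ℝ) / 3))
  · exact ENNReal.tendsto_ofReal_atTop.comp
      (tendsto_natCast_atTop_atTop.atTop_div_const (by norm_num))
  · filter_upwards [eventually_ge_atTop 1] with N hN
    rw [part1 N hN, div_one]
    exact part2 N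

end
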